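/- For any graph G, the completion graph G_co is chordal if and only if G_co is a split graph. -/

import Mathlib

open Set

variable {V : Type*}

/-- The closed neighbourhood `N_G[x]` of a vertex. -/
def closedNbhd (G : SimpleGraph V) (x : V) : Set V := insert x (G.neighborSet x)

/-- The closed neighbourhood `N_G[A]` of a set of vertices. -/
def closedNbhdSet (G : SimpleGraph V) (A : Set V) : Set V := ⋃ x ∈ A, closedNbhd G x

/-- `D` is a dominating set of `G`. -/
def Dominates (G : SimpleGraph V) (D : Set V) : Prop := ∀ v, v ∈ closedNbhdSet G D

/-- `IR` is a valid set of irredundant vertices of `G`: every member has an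
inclusion-minimal closed neighbourhood, exactly one representative is kept per class of
vertices with equal closed neighbourhoods, and every vertex with a minimal closed
neighbourhood has a representative in `IR`. The remaining (redundant) vertices form
`IRᶜ = RN(G)`. -/
def IsIrrSet (G : SimpleGraph V) (IR : Set V) : Prop :=
  (∀ x ∈ IR, ∀ y : V, closedNbhd G y ⊆ closedNbhd G x → closedNbhd G y = closedNbhd G x) ∧
  (∀ x ∈ IR, ∀ y ∈ IR, closedNbhd G x = closedNbhd G y → x = y) ∧
  (∀ x : V, (∀ y : V, closedNbhd G y ⊆ closedNbhd G x → closedNbhd G y = closedNbhd G x) →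
    ∃ z ∈ IR, closedNbhd G z = closedNbhd G x)

/-- The completion `G_co` of `G` (w.r.t. the irredundant set `IR`): all edges between
distinct redundant vertices are added. -/
def completion (G : SimpleGraph V) (IR : Set V) : SimpleGraph V where
  Adj x y := G.Adj x y ∨ (x ≠ y ∧ x ∉ IR ∧ y ∉ IR)
  symm := by
    constructor
    intro x y h
    rcases h with h | ⟨hne, hx, hy⟩
    · exact Or.inl h.symm
    · exact Or.inr ⟨hne.symm, hy, hx⟩
  loopless := by
    constructor
    intro x h
    rcases h with h | ⟨hne, _, _⟩
    · exact G.irrefl h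
    · exact hne rfl

/-- A graph is chordal if it has no induced cycle of length at least 4. -/
def Chordal (G : SimpleGraph V) : Prop :=
  ∀ n : ℕ, 4 ≤ n → IsEmpty (SimpleGraph.cycleGraph n ↪g G)

/-- A graph is `P₆`-free if it has no induced path on 6 vertices. -/
def P6Free (G : SimpleGraph V) : Prop := IsEmpty (SimpleGraph.pathGraph 6 ↪g G)

/-- A graph is a split graph if its vertex set partitions into a clique and an
independent set. -/
def IsSplit (G : SimpleGraph V) : Prop :=
  ∃ C S : Set V, C ∪ S = Set.univ ∧ C ∩ S = ∅ ∧ G.IsClique C ∧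
    S.Pairwise fun a b => ¬ G.Adj a b

-- helpers
lemma cyc_adj_iff (m : ℕ) (i j : Fin (m+2)) :
    (SimpleGraph.cycleGraph (m+2)).Adj i j ↔ j = i + 1 ∨ i = j + 1 := by
  rw [SimpleGraph.cycleGraph_adj]
  constructor
  · rintro (h | h)
    · right; rw [sub_eq_iff_eq_add] at h; rw [h]; exact add_comm 1 j
    · left; rw [sub_eq_iff_eq_add] at h; rw [h]; exact add_comm 1 i
  · rintro (h | h)
    · right; rw [h, add_sub_cancel_left]
    · left; rw [h, add_sub_cancel_left]

lemma fin_add_one_val (c : ℕ) (a : Fin (c+2)) : (a + 1).val = (a.val + 1) % (c+2) := by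
  rw [Fin.add_def, Fin.val_one]

lemma mem_closedNbhd_iff {G : SimpleGraph V} {a t : V} :
    t ∈ closedNbhd G a ↔ t = a ∨ G.Adj a t := by
  simp [closedNbhd, SimpleGraph.mem_neighborSet, Set.mem_insert_iff]

lemma completion_adj {G : SimpleGraph V} {IR : Set V} {a b : V} :
    (completion G IR).Adj a b ↔ G.Adj a b ∨ (a ≠ b ∧ a ∉ IR ∧ b ∉ IR) := Iff.rfl

lemma no_induced_cycle {H : SimpleGraph V} (hch : Chordal H) (c : ℕ) (q : ℕ → V)
    (hbig : 2 ≤ c)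
    (hinj : ∀ i j, i < j → j < c + 2 → q i ≠ q j)
    (hadj : ∀ i, i + 1 < c + 2 → H.Adj (q i) (q (i+1)))
    (hclose : H.Adj (q (c+1)) (q 0))
    (hnadj : ∀ i j, i + 2 ≤ j → j < c + 2 → ¬(i = 0 ∧ j = c+1) → ¬ H.Adj (q i) (q j)) :
    False := by
  have hemb : SimpleGraph.cycleGraph (c+2) ↪g H := by
    refine ⟨⟨fun k => q k.val, ?_⟩, ?_⟩
    · intro a b hab
      by_contra hne
      rcases lt_trichotomy a.val b.val with h | h | h
      · exact hinj _ _ h b.isLt hab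
      · exact hne (Fin.ext h)
      · exact hinj _ _ h a.isLt hab.symm
    · intro a b
      show H.Adj (q a.val) (q b.val) ↔ _
      rw [cyc_adj_iff]
      constructor
      · intro hH
        by_contra hcyc
        push_neg at hcyc
        obtain ⟨h1, h2⟩ := hcyc
        rcases lt_trichotomy a.val b.val with h | h | h
        · by_cases hs : b.val = a.val + 1
          · exact h1 (Fin.ext (by
              rw [fin_add_one_val, Nat.mod_eq_of_lt (hs ▸ b.isLt)]; exact hs))
          · by_cases hend : a.val = 0 ∧ b.val = c+1
            · refine h2 (Fin.ext ?_)
              rw [fin_add_one_val, hend.1, hend.2]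
              simp [Nat.mod_self]
            · have hj : a.val + 2 ≤ b.val := by omega
              exact hnadj a.val b.val hj b.isLt hend hH
        · have : a = b := Fin.ext h
          subst this
          exact H.irrefl hH
        · by_cases hs : a.val = b.val + 1
          · exact h2 (Fin.ext (by
              rw [fin_add_one_val, Nat.mod_eq_of_lt (hs ▸ a.isLt)]; exact hs))
          · by_cases hend : b.val = 0 ∧ a.val = c+1
            · refine h1 (Fin.ext ?_)
              rw [fin_add_one_val, hend.1, hend.2]
              simp [Nat.mod_self]
            · have hj : b.val + 2 ≤ a.val := by omega
              exact hnadj b.val a.val hj a.isLt hend hH.symm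
      · rintro (h | h)
        · subst h
          by_cases hc : a.val + 1 < c + 2
          · have h1 : (a + 1).val = a.val + 1 := by
              rw [fin_add_one_val, Nat.mod_eq_of_lt hc]
            rw [h1]
            exact hadj a.val hc
          · have hav : a.val = c + 1 := by have := a.isLt; omega
            have h1 : (a + 1).val = 0 := by
              rw [fin_add_one_val, hav]
              simp [Nat.mod_self]
            rw [h1, hav]
            exact hclose
        · subst h
          by_cases hc : b.val + 1 < c + 2
          · have h1 : (b + 1).val = b.val + 1 := by
              rw [fin_add_one_val, Nat.mod_eq_of_lt hc]
            rw [h1]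
            exact (hadj b.val hc).symm
          · have hbv : b.val = c + 1 := by have := b.isLt; omega
            have h1 : (b + 1).val = 0 := by
              rw [fin_add_one_val, hbv]
              simp [Nat.mod_self]
            rw [h1, hbv]
            exact hclose.symm
  exact (hch (c+2) (by omega)).false hemb

def GoodPath (G : SimpleGraph V) (IR : Set V) (m : ℕ) (p : ℕ → V) : Prop :=
  2 ≤ m ∧
  (∀ i j, i < j → j < m → p i ≠ p j) ∧
  (∀ i, i + 1 < m → (completion G IR).Adj (p i) (p (i+1))) ∧
  (∀ i j, i + 2 ≤ j → j < m → ¬ (completion G IR).Adj (p i) (p j)) ∧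
  (∀ i, i + 1 < m → p i ∈ IR) ∧ p 1 ∈ IR

lemma grow [Fintype V] {G : SimpleGraph V} {IR : Set V} (hIR : IsIrrSet G IR)
    (hch : Chordal (completion G IR)) :
    ∀ k m p, GoodPath G IR m p → m + k = Fintype.card V + 1 → False := by
  intro k
  induction k with
  | zero =>
    intro m p hp hcard
    obtain ⟨h2, hinj, _⟩ := hp
    have hemb : Function.Injective (fun i : Fin m => p i.val) := by
      intro a b hab
      by_contra hne
      rcases lt_trichotomy a.val b.val with h | h | h
      · exact hinj _ _ h b.isLt hab
      · exact hne (Fin.ext h)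
      · exact hinj _ _ h a.isLt hab.symm
    have := Fintype.card_le_of_injective _ hemb
    rw [Fintype.card_fin] at this
    omega
  | succ k IH =>
    intro m p hp hcard
    obtain ⟨h2, hinj, hadj, hnadj, hIRp, h1IR⟩ := hp
    have h0IR : p 0 ∈ IR := hIRp 0 (by omega)
    have h01 : (completion G IR).Adj (p 0) (p 1) := hadj 0 (by omega)
    have hne01 : p 0 ≠ p 1 := hinj 0 1 (by omega) (by omega)
    have hG01 : G.Adj (p 0) (p 1) := by
      rcases completion_adj.mp h01 with h | ⟨_, h, _⟩
      · exact h
      · exact absurd h0IR h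
    have hNsub : ¬ closedNbhd G (p 0) ⊆ closedNbhd G (p 1) := by
      intro hsub
      have heq := hIR.1 (p 1) h1IR (p 0) hsub
      exact hne01 (hIR.2.1 (p 0) h0IR (p 1) h1IR heq)
    obtain ⟨t, htN, htn⟩ := Set.not_subset.mp hNsub
    have htp0 : t ≠ p 0 := fun h => htn (h ▸ mem_closedNbhd_iff.mpr (Or.inr hG01.symm))
    have htp1 : t ≠ p 1 := fun h => htn (h ▸ mem_closedNbhd_iff.mpr (Or.inl rfl))
    have htA : G.Adj (p 0) t := by
      rcases mem_closedNbhd_iff.mp htN with h | h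
      · exact absurd h htp0
      · exact h
    have htH : (completion G IR).Adj t (p 0) := Or.inl htA.symm
    have htn1 : ¬ (completion G IR).Adj t (p 1) := by
      rintro (h | ⟨_, _, h⟩)
      · exact htn (mem_closedNbhd_iff.mpr (Or.inr h.symm))
      · exact h h1IR
    classical
    by_cases hex : ∃ j, 2 ≤ j ∧ j < m ∧ (completion G IR).Adj t (p j)
    · -- a chord exists: build an induced cycle
      set j := Nat.find hex with hjdef
      obtain ⟨hj2, hjm, hjadj⟩ := Nat.find_spec hex
      have hjmin : ∀ j', j' < j → ¬(2 ≤ j' ∧ j' < m ∧ (completion G IR).Adj t (p j')) :=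
        fun j' hj' => Nat.find_min hex hj'
      have hfresh : ∀ i, i ≤ j → t ≠ p i := by
        intro i hij heq
        match i, hij with
        | 0, _ => exact htp0 heq
        | 1, _ => exact htp1 heq
        | (i'+2), hij =>
          have hedge : (completion G IR).Adj (p (i'+1)) (p (i'+2)) :=
            hadj (i'+1) (by omega)
          rw [← heq] at hedge
          rcases Nat.eq_zero_or_pos i' with hi0 | hi0
          · subst hi0; exact htn1 hedge.symm
          · exact hjmin (i'+1) (by omega) ⟨by omega, by omega, hedge.symm⟩
      refine no_induced_cycle hch j
        (fun i => match i with | 0 => t | Nat.succ i' => p i') hj2 ?_ ?_ ?_ ?_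
      · rintro i j' hij hj' heq
        match i, j', hij, hj' with
        | 0, (j''+1), _, hj' => exact hfresh j'' (by omega) heq
        | (i''+1), (j''+1), hij, hj' => exact hinj i'' j'' (by omega) (by omega) heq
      · rintro i hi
        match i, hi with
        | 0, _ => exact htH
        | (i''+1), hi => exact hadj i'' (by omega)
      · exact hjadj.symm
      · rintro i j' hij hj' hend hADJ
        match i, j', hij, hj' with
        | 0, (j''+1), hij, hj' =>
          rcases Nat.lt_or_ge j'' 1 with h1 | h1
          · interval_cases j''
            · omega
          · rcases Nat.eq_or_lt_of_le h1 with h1' | h1'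
            · rw [← h1'] at hADJ; exact htn1 hADJ
            · exact hjmin j'' (by omega) ⟨by omega, by omega, hADJ⟩
        | (i''+1), (j''+1), hij, hj' =>
          exact hnadj i'' j'' (by omega) (by omega) hADJ
    · push_neg at hex
      have hfresh : ∀ i, i < m → t ≠ p i := by
        intro i hij heq
        match i, hij with
        | 0, _ => exact htp0 heq
        | 1, _ => exact htp1 heq
        | (i'+2), hij =>
          have hedge : (completion G IR).Adj (p (i'+1)) (p (i'+2)) :=
            hadj (i'+1) (by omega)
          rw [← heq] at hedge
          rcases Nat.eq_zero_or_pos i' with hi0 | hi0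
          · subst hi0; exact htn1 hedge.symm
          · exact hex (i'+1) (by omega) (by omega) hedge.symm
      by_cases htIR : t ∈ IR
      · -- prepend t
        refine IH (m+1) (fun i => match i with | 0 => t | Nat.succ i' => p i') ⟨by omega, ?_, ?_, ?_, ?_, ?_⟩ (by omega)
        · rintro i j' hij hj'
          match i, j', hij, hj' with
          | 0, (j''+1), _, hj' => exact hfresh j'' (by omega)
          | (i''+1), (j''+1), hij, hj' => exact hinj i'' j'' (by omega) (by omega)
        · rintro i hi
          match i, hi with
          | 0, _ => exact htH
          | (i''+1), hi => exact hadj i'' (by omega)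
        · rintro i j' hij hj' hADJ
          match i, j', hij, hj' with
          | 0, (j''+1), hij, hj' =>
            rcases Nat.eq_or_lt_of_le (show 1 ≤ j'' by omega) with h1' | h1'
            · rw [← h1'] at hADJ; exact htn1 hADJ
            · exact hex j'' (by omega) (by omega) hADJ
          | (i''+1), (j''+1), hij, hj' =>
            exact hnadj i'' j'' (by omega) (by omega) hADJ
        · rintro i hi
          match i, hi with
          | 0, _ => exact htIR
          | (i''+1), hi => exact hIRp i'' (by omega)
        · exact h0IR
      · -- t is redundant: reverse the path and append t at the far end
        have hlast : p (m-1) ∈ IR := by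
          rcases Nat.eq_or_lt_of_le h2 with hm2 | hm2
          · have : m - 1 = 1 := by omega
            rw [this]; exact h1IR
          · by_contra hR
            exact hex (m-1) (by omega) (by omega)
              (Or.inr ⟨hfresh (m-1) (by omega), htIR, hR⟩)
        have hall : ∀ i, i < m → p i ∈ IR := by
          intro i hi
          rcases Nat.lt_or_ge (i+1) m with h | h
          · exact hIRp i h
          · have : i = m - 1 := by omega
            rw [this]; exact hlast
        refine IH (m+1) (fun i => if i < m then p (m-1-i) else t)
          ⟨by omega, ?_, ?_, ?_, ?_, ?_⟩ (by omega)
        · intro i j' hij hj'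
          rcases Nat.lt_or_ge j' m with hj | hj
          · simp only [if_pos hj, if_pos (by omega : i < m)]
            intro heq
            exact hinj (m-1-j') (m-1-i) (by omega) (by omega) heq.symm
          · have hj'm : j' = m := by omega
            simp only [if_pos (by omega : i < m), if_neg (by omega : ¬ j' < m)]
            exact fun heq => hfresh (m-1-i) (by omega) heq.symm
        · intro i hi
          rcases Nat.lt_or_ge (i+1) m with h | h
          · simp only [if_pos (by omega : i < m), if_pos h]
            have : m - 1 - i = (m-1-(i+1)) + 1 := by omega
            rw [this]
            exact (hadj (m-1-(i+1)) (by omega)).symm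
          · have him : i = m - 1 := by omega
            simp only [if_pos (by omega : i < m), if_neg (by omega : ¬ i + 1 < m)]
            have : m - 1 - i = 0 := by omega
            rw [this]
            exact htH.symm
        · intro i j' hij hj' hADJ
          rcases Nat.lt_or_ge j' m with hj | hj
          · simp only [if_pos hj, if_pos (by omega : i < m)] at hADJ
            exact hnadj (m-1-j') (m-1-i) (by omega) (by omega) hADJ.symm
          · simp only [if_pos (by omega : i < m), if_neg (by omega : ¬ j' < m)] at hADJ
            set s := m - 1 - i with hs
            have hs1 : 1 ≤ s := by omega
            rcases Nat.eq_or_lt_of_le hs1 with h1' | h1'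
            · rw [← h1'] at hADJ; exact htn1 hADJ.symm
            · exact hex s (by omega) (by omega) hADJ.symm
        · intro i hi
          rcases Nat.lt_or_ge i m with h | h
          · simp only [if_pos h]
            exact hall (m-1-i) (by omega)
          · omega
        · simp only [if_pos (by omega : 1 < m)]
          exact hall (m-2) (by omega)


lemma IR_indep [Fintype V] {G : SimpleGraph V} {IR : Set V} (hIR : IsIrrSet G IR)
    (hch : Chordal (completion G IR)) :
    ∀ x ∈ IR, ∀ y ∈ IR, x ≠ y → ¬ (completion G IR).Adj x y := by
  intro x hx y hy hxy hadj
  have hcard : 1 ≤ Fintype.card V := by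
    have : Nonempty V := ⟨x⟩
    exact Fintype.card_pos
  refine grow hIR hch (Fintype.card V - 1) 2
    (fun i => match i with | 0 => x | Nat.succ _ => y) ⟨le_refl 2, ?_, ?_, ?_, ?_, hy⟩ (by omega)
  · intro i j hij hj
    obtain ⟨rfl, rfl⟩ : i = 0 ∧ j = 1 := by omega
    exact hxy
  · intro i hi
    obtain rfl : i = 0 := by omega
    exact hadj
  · intro i j hij hj
    omega
  · intro i hi
    obtain rfl : i = 0 := by omega
    exact hx

open Fin.NatCast Fin.CommRing

lemma fin_shift_eq (m : ℕ) (i : Fin (m+4)) (a b : ℕ) (ha : a < m+4) (hb : b < m+4)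
    (h : i + (a : Fin (m+4)) = i + (b : Fin (m+4))) : a = b := by
  have h4 := Fin.ext_iff.mp (add_left_cancel h)
  rwa [Fin.val_natCast, Fin.val_natCast, Nat.mod_eq_of_lt ha, Nat.mod_eq_of_lt hb] at h4


/-- For any graph `G`, the completion `G_co` is chordal iff it is a split graph. -/
theorem stmt_17 [Fintype V] (G : SimpleGraph V) (IR : Set V) (hIR : IsIrrSet G IR) :
    Chordal (completion G IR) ↔ IsSplit (completion G IR) := by
  constructor
  · intro hch
    refine ⟨IRᶜ, IR, Set.compl_union_self IR, Set.compl_inter_self IR, ?_, ?_⟩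
    · intro a ha b hb hab
      exact Or.inr ⟨hab, ha, hb⟩
    · intro a ha b hb hab
      exact IR_indep hIR hch a ha b hb hab
  · rintro ⟨C, S, hcover, hdisj, hclique, hindep⟩ n hn
    constructor
    intro f
    obtain ⟨m, rfl⟩ : ∃ m, n = m + 4 := ⟨n - 4, by omega⟩
    have hmem : ∀ v : V, v ∈ C ∨ v ∈ S := by
      intro v
      have : v ∈ C ∪ S := by rw [hcover]; exact Set.mem_univ v
      exact this
    have cons : ∀ i : Fin (m+4), f i ∈ C ∨ f (i + ((1:ℕ) : Fin (m+4))) ∈ C := by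
      intro i
      by_contra hcon
      push_neg at hcon
      have h1 : f i ∈ S := (hmem _).resolve_left hcon.1
      have h2 : f (i + ((1:ℕ) : Fin (m+4))) ∈ S := (hmem _).resolve_left hcon.2
      have hadj : (completion G IR).Adj (f i) (f (i + ((1:ℕ) : Fin (m+4)))) := by
        refine f.map_rel_iff.mpr ?_
        rw [cyc_adj_iff (m+2)]
        exact Or.inl (by rw [Nat.cast_one])
      exact hindep h1 h2 hadj.ne hadj
    have anti : ∀ i : Fin (m+4), ¬(f i ∈ C ∧ f (i + ((2:ℕ) : Fin (m+4))) ∈ C) := by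
      rintro i ⟨h1, h2⟩
      have hne : f i ≠ f (i + ((2:ℕ) : Fin (m+4))) := by
        intro he
        have hi := f.injective he
        have hi' : i + ((0:ℕ) : Fin (m+4)) = i + ((2:ℕ) : Fin (m+4)) := by
          rw [Nat.cast_zero, add_zero]; exact hi
        have := fin_shift_eq m i 0 2 (by omega) (by omega) hi'
        omega
      have hadjcyc := f.map_rel_iff.mp (hclique h1 h2 hne)
      rw [cyc_adj_iff (m+2)] at hadjcyc
      rcases hadjcyc with h | h
      · have h' : i + ((2:ℕ) : Fin (m+4)) = i + ((1:ℕ) : Fin (m+4)) := by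
          rw [h, Nat.cast_one]
        have := fin_shift_eq m i 2 1 (by omega) (by omega) h'
        omega
      · have h' : i + ((0:ℕ) : Fin (m+4)) = i + ((3:ℕ) : Fin (m+4)) := by
          calc i + ((0:ℕ) : Fin (m+4)) = i := by rw [Nat.cast_zero, add_zero]
          _ = i + ((2:ℕ) : Fin (m+4)) + 1 := h
          _ = i + ((3:ℕ) : Fin (m+4)) := by push_cast; ring
        have := fin_shift_eq m i 0 3 (by omega) (by omega) h'
        omega
    obtain ⟨i₀, hC⟩ : ∃ i₀ : Fin (m+4), f i₀ ∈ C := by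
      rcases cons 0 with h | h
      · exact ⟨0, h⟩
      · exact ⟨_, h⟩
    have hn2 : f (i₀ + ((2:ℕ) : Fin (m+4))) ∉ C := fun h => anti i₀ ⟨hC, h⟩
    have h3 : f (i₀ + ((3:ℕ) : Fin (m+4))) ∈ C := by
      rcases cons (i₀ + ((2:ℕ) : Fin (m+4))) with h | h
      · exact absurd h hn2
      · rwa [show i₀ + ((2:ℕ) : Fin (m+4)) + ((1:ℕ) : Fin (m+4)) = i₀ + ((3:ℕ) : Fin (m+4)) by
          push_cast; ring] at h
    have hn1 : f (i₀ + ((1:ℕ) : Fin (m+4))) ∉ C := by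
      intro h
      refine anti (i₀ + ((1:ℕ) : Fin (m+4))) ⟨h, ?_⟩
      rwa [show i₀ + ((1:ℕ) : Fin (m+4)) + ((2:ℕ) : Fin (m+4)) = i₀ + ((3:ℕ) : Fin (m+4)) by
        push_cast; ring]
    rcases cons (i₀ + ((1:ℕ) : Fin (m+4))) with h | h
    · exact hn1 h
    · refine hn2 ?_
      rwa [show i₀ + ((1:ℕ) : Fin (m+4)) + ((1:ℕ) : Fin (m+4)) = i₀ + ((2:ℕ) : Fin (m+4)) by
        push_cast; ring] at h
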